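/- Let a > 0 and ε ∈ (0, R₁]. If v : (0, ε] → ℝ is continuous and satisfies (a/2) t ≤ v(t) ≤ a t for all t ∈ (0, ε], then the function t ↦ h(t) f(v(t)) is integrable on (0, ε); in particular its integral over (0, t) is defined and continuous in t for t ∈ [0, ε]. -/

import Mathlib

open Real Set Filter MeasureTheory

theorem stmt_5
    (N : ℕ) (hN : 2 < N)
    (R R₁ : ℝ) (hR : 0 < R) (hR₁ : R₁ = R ^ ((2 : ℝ) - N))
    (f g g₁ : ℝ → ℝ) (p q : ℝ) (hp : 1 < p) (hq0 : 0 < q) (hq1 : q < 1)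
    (hodd : ∀ u : ℝ, f (-u) = - f u)
    (hfloclip : ∀ x : ℝ, x ≠ 0 → ∃ ε > (0 : ℝ), ∃ L : NNReal, LipschitzOnWith L f (Metric.ball x ε))
    (hH1 : ∀ u : ℝ, u ≠ 0 → f u = |u| ^ (p - 1) * u + g u)
    (hglim : ∀ ε : ℝ, 0 < ε → ∃ M : ℝ, 0 < M ∧ ∀ u : ℝ, M ≤ |u| → |g u / |u| ^ p| ≤ ε)
    (hH2 : ∀ u : ℝ, u ≠ 0 → f u = u / |u| ^ (q + 1) + g₁ u)
    (hg1lip : LocallyLipschitz g₁) (hg10 : g₁ 0 = 0)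
    (hfpos : ∀ w : ℝ, 0 < w → 0 < f w)
    (K : ℝ → ℝ) (K₀ K₁ α : ℝ) (hK₀ : 0 < K₀) (hK₁ : 0 < K₁)
    (hα₁ : (N : ℝ) + q * ((N : ℝ) - 2) < α) (hα₂ : α < 2 * ((N : ℝ) - 1))
    (hKpos : ∀ r : ℝ, R ≤ r → 0 < K r)
    (hKdiff : ∀ r : ℝ, R ≤ r → DifferentiableAt ℝ K r)
    (hK'cont : ContinuousOn (deriv K) (Ici R))
    (hKlb : ∀ r : ℝ, R ≤ r → K₀ * r ^ (-α) ≤ K r)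
    (hKub : ∀ r : ℝ, R ≤ r → K r ≤ K₁ * r ^ (-α))
    (hKratio : ∀ r : ℝ, R ≤ r → -(r * deriv K r / K r) < 2 * ((N : ℝ) - 1))
    (hKlim : Tendsto (fun r => r * deriv K r / K r) atTop (nhds (-α)))
    (h : ℝ → ℝ)
    (hh : ∀ t : ℝ, t ∈ Ioc (0 : ℝ) R₁ →
      h t = t ^ (2 * ((N : ℝ) - 1) / (2 - (N : ℝ))) * K (t ^ (1 / (2 - (N : ℝ)))) / ((N : ℝ) - 2) ^ 2)
    (a ε : ℝ) (ha : 0 < a) (hε0 : 0 < ε) (hεR : ε ≤ R₁)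
    (v : ℝ → ℝ) (hvcont : ContinuousOn v (Ioc 0 ε))
    (hvbd : ∀ t ∈ Ioc (0 : ℝ) ε, a / 2 * t ≤ v t ∧ v t ≤ a * t) :
    IntegrableOn (fun t => h t * f (v t)) (Ioo 0 ε) ∧
      ContinuousOn (fun t => ∫ s in Ioo (0 : ℝ) t, h s * f (v s)) (Icc 0 ε) := by
  have hN2 : (0:ℝ) < (N:ℝ) - 2 := by
    have : (2:ℝ) < N := by exact_mod_cast hN
    linarith
  have hN2' : ((N:ℝ) - 2) ≠ 0 := ne_of_gt hN2
  have h2N : (2 : ℝ) - N ≠ 0 := by linarith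
  set c : ℝ := 1 / (2 - (N:ℝ)) with hc
  set e : ℝ := 2 * ((N:ℝ) - 1) / (2 - (N:ℝ)) with he
  set β : ℝ := (α - 2 * ((N:ℝ) - 1)) / ((N:ℝ) - 2) with hβ
  have hcneg : c < 0 := by
    rw [hc]
    apply div_neg_of_pos_of_neg one_pos
    linarith
  have hβ1 : q - 1 < β := by
    rw [hβ, lt_div_iff₀ hN2]
    nlinarith
  have hrR : ∀ t : ℝ, 0 < t → t ≤ R₁ → R ≤ t ^ c := by
    intro t ht htR
    have h1 : R₁ ^ c ≤ t ^ c := Real.rpow_le_rpow_of_nonpos ht htR hcneg.le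
    have h2 : R₁ ^ c = R := by
      have h3 : ((2:ℝ) - N) * c = 1 := by rw [hc]; field_simp
      rw [hR₁, ← Real.rpow_mul hR.le, h3, Real.rpow_one]
    linarith
  -- positivity of v
  have hvpos : ∀ t ∈ Ioc (0:ℝ) ε, 0 < v t := by
    intro t ht
    have := (hvbd t ht).1
    nlinarith [ht.1]
  -- bound on g₁
  obtain ⟨M, hM⟩ := (isCompact_Icc (a := (0:ℝ)) (b := a*ε)).exists_bound_of_continuousOn
    hg1lip.continuous.continuousOn
  have hMv : ∀ t ∈ Ioc (0:ℝ) ε, ‖g₁ (v t)‖ ≤ M := by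
    intro t ht
    refine hM _ ⟨(hvpos t ht).le, ?_⟩
    have := (hvbd t ht).2
    have h4 : a * t ≤ a * ε := by nlinarith [ht.2]
    linarith
  -- bound on f (v t)
  have hfvbd : ∀ t ∈ Ioc (0:ℝ) ε, |f (v t)| ≤ (a/2)^(-q) * t^(-q) + M := by
    intro t ht
    set u := v t with hu
    have hupos : 0 < u := hvpos t ht
    have h5 : f u = u ^ (-q) + g₁ u := by
      rw [hH2 u hupos.ne', abs_of_pos hupos,
        show -q = 1 - (q+1) by ring, Real.rpow_sub hupos, Real.rpow_one]
    have h6 : u ^ (-q) ≤ (a/2 * t) ^ (-q) := by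
      apply Real.rpow_le_rpow_of_nonpos (by nlinarith [ht.1]) (hvbd t ht).1
      linarith
    have h7 : (a/2 * t) ^ (-q) = (a/2)^(-q) * t^(-q) :=
      Real.mul_rpow (by linarith) ht.1.le
    calc |f u| ≤ |u ^ (-q)| + |g₁ u| := by rw [h5]; exact abs_add_le _ _
      _ ≤ (a/2)^(-q) * t^(-q) + M := by
          apply add_le_add
          · rw [abs_of_nonneg (Real.rpow_nonneg hupos.le _)]
            rw [← h7]; exact h6
          · exact hMv t ht
  -- bound on h
  have hec : e + c * (-α) = β := by rw [he, hc, hβ]; field_simp; ring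
  have hhbd : ∀ t ∈ Ioc (0:ℝ) ε, 0 ≤ h t ∧ h t ≤ K₁ / ((N:ℝ)-2)^2 * t ^ β := by
    intro t ht
    have htR₁ : t ∈ Ioc (0:ℝ) R₁ := ⟨ht.1, le_trans ht.2 hεR⟩
    have hrt : R ≤ t ^ c := hrR t ht.1 htR₁.2
    have hK : 0 < K (t ^ c) := hKpos _ hrt
    have hte : (0:ℝ) < t ^ e := Real.rpow_pos_of_pos ht.1 _
    constructor
    · rw [hh t htR₁]
      positivity
    · rw [hh t htR₁]
      have h8 : K (t^c) ≤ K₁ * (t^c) ^ (-α) := hKub _ hrt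
      have h9 : t ^ e * (t^c)^(-α) = t ^ β := by
        rw [← Real.rpow_mul ht.1.le, ← Real.rpow_add ht.1, hec]
      calc t ^ e * K (t ^ c) / ((N:ℝ)-2)^2
          ≤ t ^ e * (K₁ * (t^c)^(-α)) / ((N:ℝ)-2)^2 := by
            apply div_le_div_of_nonneg_right ?_ (by positivity)
            exact mul_le_mul_of_nonneg_left h8 hte.le
        _ = K₁ / ((N:ℝ)-2)^2 * t ^ β := by rw [← h9]; ring
  -- total pointwise bound
  set C : ℝ := K₁ / ((N:ℝ)-2)^2 with hC
  set B : ℝ → ℝ := fun t => C * (a/2)^(-q) * t ^ (β - q) + C * M * t ^ β with hB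
  have hFB : ∀ t ∈ Ioc (0:ℝ) ε, ‖h t * f (v t)‖ ≤ B t := by
    intro t ht
    obtain ⟨hh0, hh1⟩ := hhbd t ht
    have h10 := hfvbd t ht
    have habs : ‖h t * f (v t)‖ = h t * |f (v t)| := by
      rw [Real.norm_eq_abs, abs_mul, abs_of_nonneg hh0]
    rw [habs]
    have hfnn : (0:ℝ) ≤ |f (v t)| := abs_nonneg _
    have h11 : h t * |f (v t)| ≤ (C * t ^ β) * ((a/2)^(-q) * t^(-q) + M) := by
      apply mul_le_mul hh1 h10 hfnn
      rw [hC]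
      exact mul_nonneg (div_nonneg hK₁.le (by positivity)) (Real.rpow_nonneg ht.1.le _)
    have h12 : t ^ (β - q) = t ^ β * t ^ (-q) := by
      rw [← Real.rpow_add ht.1]; ring_nf
    calc h t * |f (v t)| ≤ (C * t ^ β) * ((a/2)^(-q) * t^(-q) + M) := h11
      _ = B t := by rw [hB]; simp only [h12]; ring
  -- integrability of B
  have hintB : IntegrableOn B (Ioo 0 ε) := by
    have hi1 : IntegrableOn (fun t : ℝ => t ^ (β - q)) (Ioo 0 ε) := by
      have := intervalIntegral.intervalIntegrable_rpow' (a := 0) (b := ε) (r := β - q)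
        (by linarith)
      rwa [intervalIntegrable_iff_integrableOn_Ioo_of_le hε0.le] at this
    have hi2 : IntegrableOn (fun t : ℝ => t ^ β) (Ioo 0 ε) := by
      have := intervalIntegral.intervalIntegrable_rpow' (a := 0) (b := ε) (r := β)
        (by linarith)
      rwa [intervalIntegrable_iff_integrableOn_Ioo_of_le hε0.le] at this
    exact (hi1.const_mul _).add (hi2.const_mul _)
  -- continuity / measurability of F
  have hfcont : ContinuousOn f (Ioi (0:ℝ)) := by
    intro u hu
    obtain ⟨δ, hδ, L, hL⟩ := hfloclip u (ne_of_gt hu)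
    exact (hL.continuousOn.continuousAt (Metric.ball_mem_nhds u hδ)).continuousWithinAt
  have hfv : ContinuousOn (fun t => f (v t)) (Ioo 0 ε) := by
    apply hfcont.comp (hvcont.mono Ioo_subset_Ioc_self)
    intro t ht
    exact hvpos t (Ioo_subset_Ioc_self ht)
  have hKcont : ContinuousOn K (Ici R) := fun r hr =>
    (hKdiff r hr).continuousAt.continuousWithinAt
  have hrc : ContinuousOn (fun t : ℝ => t ^ c) (Ioo 0 ε) := by
    apply ContinuousOn.rpow_const continuousOn_id
    intro t ht
    exact Or.inl (ne_of_gt ht.1)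
  have hte : ContinuousOn (fun t : ℝ => t ^ e) (Ioo 0 ε) := by
    apply ContinuousOn.rpow_const continuousOn_id
    intro t ht
    exact Or.inl (ne_of_gt ht.1)
  have hφ : ContinuousOn (fun t => t ^ e * K (t ^ c) / ((N:ℝ)-2)^2) (Ioo 0 ε) := by
    apply ContinuousOn.div_const
    apply hte.mul
    apply hKcont.comp hrc
    intro t ht
    exact hrR t ht.1 (le_trans ht.2.le hεR)
  have hFcont : ContinuousOn (fun t => h t * f (v t)) (Ioo 0 ε) := by
    apply ContinuousOn.congr (hφ.mul hfv)
    intro t ht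
    simp only [Pi.mul_apply]
    rw [hh t ⟨ht.1, le_trans ht.2.le hεR⟩]
  have hInt : IntegrableOn (fun t => h t * f (v t)) (Ioo 0 ε) := by
    apply Integrable.mono' hintB (hFcont.aestronglyMeasurable measurableSet_Ioo)
    rw [ae_restrict_iff' measurableSet_Ioo]
    filter_upwards with t ht
    exact hFB t (Ioo_subset_Ioc_self ht)
  refine ⟨hInt, ?_⟩
  have hIcc : IntegrableOn (fun t => h t * f (v t)) (Icc 0 ε) :=
    hInt.congr_set_ae Ioo_ae_eq_Icc.symm
  have hcont := intervalIntegral.continuousOn_primitive (a := 0) (b := ε) hIcc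
  apply hcont.congr
  intro x hx
  exact setIntegral_congr_set Ioo_ae_eq_Ioc
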